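/- Let Φ : ℝⁿ → [0,∞) be an n-dimensional N-function. Then there exist a strictly convex n-dimensional N-function Ψ : ℝⁿ → [0,∞) and a constant c > 0 such that Φ(ξ) ≤ Ψ(ξ) ≤ Φ((1+c)ξ) for all ξ ∈ ℝⁿ; in particular Ψ is equivalent to Φ. -/

import Mathlib

open MeasureTheory Filter Topology
open scoped RealInnerProductSpace ENNReal

/-- An `n`-dimensional (finite-valued) Young function: an even, convex function
`Φ : ℝⁿ → [0,∞)` with `Φ(0) = 0` such that for every `t > 0` the sublevel set
`{ξ : Φ ξ < t}` is bounded and is a neighborhood of `0`. -/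
structure IsYoungFunction {n : ℕ} (Φ : EuclideanSpace ℝ (Fin n) → ℝ) : Prop where
  nonneg : ∀ ξ, 0 ≤ Φ ξ
  even : ∀ ξ, Φ (-ξ) = Φ ξ
  convex : ConvexOn ℝ Set.univ Φ
  map_zero : Φ 0 = 0
  sublevel_bounded : ∀ t > 0, Bornology.IsBounded {ξ | Φ ξ < t}
  sublevel_mem_nhds : ∀ t > 0, {ξ | Φ ξ < t} ∈ 𝓝 (0 : EuclideanSpace ℝ (Fin n))

/-- An `n`-dimensional `N`-function: a finite-valued Young function vanishing only
at `0`, with `Φ(ξ)/|ξ| → ∞` as `|ξ| → ∞` and `Φ(ξ)/|ξ| → 0` as `|ξ| → 0`. -/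
structure IsNFunction {n : ℕ} (Φ : EuclideanSpace ℝ (Fin n) → ℝ)
    extends IsYoungFunction Φ : Prop where
  eq_zero : ∀ ξ, Φ ξ = 0 → ξ = 0
  tendsto_atTop : Tendsto (fun ξ => Φ ξ / ‖ξ‖)
    (Bornology.cobounded (EuclideanSpace ℝ (Fin n))) atTop
  tendsto_zero : Tendsto (fun ξ => Φ ξ / ‖ξ‖)
    (𝓝[≠] (0 : EuclideanSpace ℝ (Fin n))) (𝓝 0)

noncomputable section AuxNFConstruction

/-- Infimum of `Φ` on the sphere of radius `r`. -/
private def mAux {n : ℕ} (Φ : EuclideanSpace ℝ (Fin n) → ℝ) (r : ℝ) : ℝ :=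
  sInf (Φ '' Metric.sphere (0 : EuclideanSpace ℝ (Fin n)) r)

private def gAux {n : ℕ} (Φ : EuclideanSpace ℝ (Fin n) → ℝ) (r : ℝ) : ℝ :=
  sInf ((fun s => mAux Φ s / s) '' Set.Ici r)

private def GAux {n : ℕ} (Φ : EuclideanSpace ℝ (Fin n) → ℝ) (r : ℝ) : ℝ :=
  if r ≤ 0 then 0 else gAux Φ r * (r / (1 + r))

private def hAux {n : ℕ} (Φ : EuclideanSpace ℝ (Fin n) → ℝ) (r : ℝ) : ℝ :=
  ∫ t in (0:ℝ)..r, GAux Φ t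

end AuxNFConstruction

/-- The integral of a monotone function that is strictly increasing on `[0,∞)`
is strictly convex and strictly monotone on `[0,∞)`. -/
private lemma strict_facts_of_G {G : ℝ → ℝ} (hmono : Monotone G) (h00 : G 0 = 0)
    (hstrict : ∀ ⦃a b : ℝ⦄, 0 ≤ a → a < b → G a < G b) :
    StrictConvexOn ℝ (Set.Ici (0:ℝ)) (fun r => ∫ t in (0:ℝ)..r, G t) ∧
      StrictMonoOn (fun r => ∫ t in (0:ℝ)..r, G t) (Set.Ici (0:ℝ)) := by
  have hint : ∀ a b : ℝ, IntervalIntegrable G MeasureTheory.volume a b :=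
    fun a b => hmono.intervalIntegrable
  have hGnonneg : ∀ a : ℝ, 0 ≤ a → 0 ≤ G a := fun a ha => h00 ▸ hmono ha
  have hsub : ∀ a b : ℝ,
      (∫ t in (0:ℝ)..b, G t) - ∫ t in (0:ℝ)..a, G t = ∫ t in a..b, G t :=
    fun a b => intervalIntegral.integral_interval_sub_left (hint 0 b) (hint 0 a)
  have hup : ∀ a b : ℝ, a ≤ b → (∫ t in a..b, G t) ≤ (b - a) * G b := by
    intro a b hab
    have h1 : (∫ t in a..b, G t) ≤ ∫ _t in a..b, G b :=
      intervalIntegral.integral_mono_on hab (hint a b) intervalIntegrable_const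
        (fun t ht => hmono ht.2)
    simpa [intervalIntegral.integral_const, smul_eq_mul] using h1
  have hlow : ∀ a b : ℝ, 0 ≤ a → a < b → (b - a) * G a < ∫ t in a..b, G t := by
    intro a b ha hab
    set c := (a + b) / 2 with hc
    have hac : a < c := by rw [hc]; linarith
    have hcb : c < b := by rw [hc]; linarith
    have hsplit : (∫ t in a..c, G t) + ∫ t in c..b, G t = ∫ t in a..b, G t :=
      intervalIntegral.integral_add_adjacent_intervals (hint a c) (hint c b)
    have h1 : (c - a) * G a ≤ ∫ t in a..c, G t := by
      have h := intervalIntegral.integral_mono_on hac.le intervalIntegrable_const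
        (hint a c) (fun t ht => hmono ht.1)
      simpa [intervalIntegral.integral_const, smul_eq_mul] using h
    have h2 : (b - c) * G c ≤ ∫ t in c..b, G t := by
      have h := intervalIntegral.integral_mono_on hcb.le intervalIntegrable_const
        (hint c b) (fun t ht => hmono ht.1)
      simpa [intervalIntegral.integral_const, smul_eq_mul] using h
    have h3 : G a < G c := hstrict ha hac
    nlinarith [mul_pos (sub_pos.mpr hcb) (sub_pos.mpr h3)]
  constructor
  · refine strictConvexOn_of_slope_strict_mono_adjacent (convex_Ici 0) ?_
    intro x y z hx _hz hxy hyz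
    have hx0 : (0:ℝ) ≤ x := hx
    have hy0 : (0:ℝ) ≤ y := le_of_lt (lt_of_le_of_lt hx0 hxy)
    have h1 : (∫ t in x..y, G t) / (y - x) ≤ G y := by
      rw [div_le_iff₀ (by linarith)]
      have := hup x y hxy.le
      linarith [this]
    have h2 : G y < (∫ t in y..z, G t) / (z - y) := by
      rw [lt_div_iff₀ (by linarith)]
      have := hlow y z hy0 hyz
      linarith [this]
    have key : ((∫ t in (0:ℝ)..y, G t) - ∫ t in (0:ℝ)..x, G t) / (y - x)
        < ((∫ t in (0:ℝ)..z, G t) - ∫ t in (0:ℝ)..y, G t) / (z - y) := by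
      rw [hsub x y, hsub y z]
      exact lt_of_le_of_lt h1 h2
    exact key
  · intro a ha b _hb hab
    have ha0 : (0:ℝ) ≤ a := ha
    have h1 : (b - a) * G a < ∫ t in a..b, G t := hlow a b ha0 hab
    have h2 : 0 ≤ (b - a) * G a :=
      mul_nonneg (sub_nonneg.mpr hab.le) (hGnonneg a ha0)
    have h3 := hsub a b
    show (∫ t in (0:ℝ)..a, G t) < ∫ t in (0:ℝ)..b, G t
    linarith

/-- Composing a strictly convex strictly monotone function on `[0,∞)` with the
norm of a strictly convex space gives a strictly convex function. -/
private lemma strictConvexOn_comp_norm {E : Type*} [NormedAddCommGroup E] [NormedSpace ℝ E]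
    [StrictConvexSpace ℝ E] {h : ℝ → ℝ}
    (hconv : StrictConvexOn ℝ (Set.Ici (0:ℝ)) h) (hmono : StrictMonoOn h (Set.Ici (0:ℝ))) :
    StrictConvexOn ℝ Set.univ (fun x : E => h ‖x‖) := by
  refine ⟨convex_univ, ?_⟩
  intro x _ y _ hne a b ha hb hab
  have hmonoOn : MonotoneOn h (Set.Ici (0:ℝ)) := hmono.monotoneOn
  show h ‖a • x + b • y‖ < a • h ‖x‖ + b • h ‖y‖
  simp only [smul_eq_mul]
  by_cases hxy : ‖x‖ = ‖y‖
  · have hlt : ‖a • x + b • y‖ < ‖x‖ :=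
      norm_combo_lt_of_ne le_rfl hxy.ge hne ha hb hab
    have hmain : h ‖a • x + b • y‖ < h ‖x‖ :=
      hmono (Set.mem_Ici.mpr (norm_nonneg _)) (Set.mem_Ici.mpr (norm_nonneg x)) hlt
    have hrhs : a * h ‖x‖ + b * h ‖y‖ = h ‖x‖ := by
      rw [← hxy, ← add_mul, hab, one_mul]
    rw [hrhs]
    exact hmain
  · have h1 : h ‖a • x + b • y‖ ≤ h (a * ‖x‖ + b * ‖y‖) := by
      apply hmonoOn (Set.mem_Ici.mpr (norm_nonneg _))
        (Set.mem_Ici.mpr (by positivity))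
      calc ‖a • x + b • y‖ ≤ ‖a • x‖ + ‖b • y‖ := norm_add_le _ _
        _ = a * ‖x‖ + b * ‖y‖ := by
            rw [norm_smul, norm_smul, Real.norm_eq_abs, Real.norm_eq_abs,
              abs_of_pos ha, abs_of_pos hb]
    have h2 := hconv.2 (Set.mem_Ici.mpr (norm_nonneg x))
      (Set.mem_Ici.mpr (norm_nonneg y)) hxy ha hb hab
    simp only [smul_eq_mul] at h2
    exact lt_of_le_of_lt h1 h2

private lemma aux_main {n : ℕ} (hn : 0 < n) (Φ : EuclideanSpace ℝ (Fin n) → ℝ)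
    (hΦ : IsNFunction Φ) :
    ∃ (Ψ : EuclideanSpace ℝ (Fin n) → ℝ) (c : ℝ), IsNFunction Ψ ∧
      StrictConvexOn ℝ Set.univ Ψ ∧ 0 < c ∧
      ∀ ξ, Φ ξ ≤ Ψ ξ ∧ Ψ ξ ≤ Φ ((1 + c) • ξ) := by
  haveI : Nontrivial (EuclideanSpace ℝ (Fin n)) := by
    apply Module.nontrivial_of_finrank_pos (R := ℝ)
    rw [finrank_euclideanSpace_fin]
    exact hn
  have hcont : Continuous Φ := by
    have h := hΦ.convex.continuousOn isOpen_univ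
    exact continuousOn_univ.mp h
  -- scaling inequality
  have hscale : ∀ (ξ : EuclideanSpace ℝ (Fin n)) (t : ℝ), 0 ≤ t → t ≤ 1 →
      Φ (t • ξ) ≤ t * Φ ξ := by
    intro ξ t ht ht1
    have h := hΦ.convex.2 (Set.mem_univ ξ) (Set.mem_univ (0 : EuclideanSpace ℝ (Fin n)))
      ht (by linarith : (0:ℝ) ≤ 1 - t) (by ring)
    simpa [hΦ.map_zero] using h
  have hdouble : ∀ ξ, 2 * Φ ξ ≤ Φ ((1 + 1 : ℝ) • ξ) := by
    intro ξ
    have key : ((1:ℝ)/2) • ((1 + 1 : ℝ) • ξ) = ξ := by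
      rw [smul_smul]; norm_num
    have h := hscale ((1 + 1 : ℝ) • ξ) (1/2) (by norm_num) (by norm_num)
    rw [key] at h
    have h3 := mul_le_mul_of_nonneg_left h (by norm_num : (0:ℝ) ≤ 2)
    have h4 : 2 * ((1:ℝ)/2 * Φ ((1 + 1 : ℝ) • ξ)) = Φ ((1 + 1 : ℝ) • ξ) := by ring
    rw [h4] at h3
    exact h3
  -- superlinearity radius
  obtain ⟨R, hR1, hRsup⟩ : ∃ R : ℝ, 1 ≤ R ∧
      ∀ ξ : EuclideanSpace ℝ (Fin n), R ≤ ‖ξ‖ → ‖ξ‖ ≤ Φ ξ := by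
    have h1 : ∀ᶠ ξ in Bornology.cobounded (EuclideanSpace ℝ (Fin n)), 1 ≤ Φ ξ / ‖ξ‖ :=
      hΦ.tendsto_atTop.eventually (eventually_ge_atTop 1)
    rw [← comap_norm_atTop, eventually_comap] at h1
    rw [eventually_atTop] at h1
    obtain ⟨R₀, hR₀⟩ := h1
    refine ⟨max R₀ 1, le_max_right _ _, ?_⟩
    intro ξ hξ
    have h2 : 1 ≤ Φ ξ / ‖ξ‖ := hR₀ ‖ξ‖ (le_trans (le_max_left _ _) hξ) ξ rfl
    have h3 : 0 < ‖ξ‖ := lt_of_lt_of_le (lt_of_lt_of_le one_pos (le_max_right _ _)) hξ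
    rw [le_div_iff₀ h3] at h2
    linarith
  -- facts about mAux
  have hbdd : ∀ r : ℝ, BddBelow (Φ '' Metric.sphere (0 : EuclideanSpace ℝ (Fin n)) r) := by
    intro r
    refine ⟨0, ?_⟩
    rintro y ⟨ξ, -, rfl⟩
    exact hΦ.nonneg ξ
  have hm_nonneg : ∀ r : ℝ, 0 ≤ mAux Φ r := by
    intro r
    apply Real.sInf_nonneg
    rintro y ⟨ξ, -, rfl⟩
    exact hΦ.nonneg ξ
  have hsph_ne : ∀ r : ℝ, 0 ≤ r →
      (Metric.sphere (0 : EuclideanSpace ℝ (Fin n)) r).Nonempty :=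
    fun r hr => NormedSpace.sphere_nonempty.mpr hr
  have hm_le : ∀ ξ : EuclideanSpace ℝ (Fin n), mAux Φ ‖ξ‖ ≤ Φ ξ :=
    fun ξ => csInf_le (hbdd _) ⟨ξ, mem_sphere_zero_iff_norm.mpr rfl, rfl⟩
  have hm_pos : ∀ r : ℝ, 0 < r → 0 < mAux Φ r := by
    intro r hr
    obtain ⟨ξ₀, hξ₀, hmin⟩ := (isCompact_sphere (0 : EuclideanSpace ℝ (Fin n)) r).exists_isMinOn
      (hsph_ne r hr.le) hcont.continuousOn
    have hne : ξ₀ ≠ 0 := by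
      intro h0
      rw [mem_sphere_zero_iff_norm, h0, norm_zero] at hξ₀
      exact hr.ne' hξ₀.symm
    have hpos : 0 < Φ ξ₀ :=
      lt_of_le_of_ne (hΦ.nonneg ξ₀) (fun h => hne (hΦ.eq_zero ξ₀ h.symm))
    refine lt_of_lt_of_le hpos (le_csInf ((hsph_ne r hr.le).image Φ) ?_)
    rintro y ⟨ξ, hξ, rfl⟩
    exact (isMinOn_iff.mp hmin) ξ hξ
  have hm_mono : ∀ r s : ℝ, 0 < r → r ≤ s → mAux Φ r ≤ mAux Φ s := by
    intro r s hr hrs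
    have hs : 0 < s := lt_of_lt_of_le hr hrs
    refine le_csInf ((hsph_ne s hs.le).image Φ) ?_
    rintro y ⟨ξ, hξ, rfl⟩
    rw [mem_sphere_zero_iff_norm] at hξ
    have hmem : ((r/s) • ξ) ∈ Metric.sphere (0 : EuclideanSpace ℝ (Fin n)) r := by
      rw [mem_sphere_zero_iff_norm, norm_smul, Real.norm_eq_abs,
        abs_of_pos (div_pos hr hs), hξ, div_mul_cancel₀ _ hs.ne']
    have hq1 : r / s ≤ 1 := div_le_one_of_le₀ hrs hs.le
    calc mAux Φ r ≤ Φ ((r/s) • ξ) := csInf_le (hbdd _) ⟨_, hmem, rfl⟩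
      _ ≤ (r/s) * Φ ξ := hscale ξ (r/s) (div_nonneg hr.le hs.le) hq1
      _ ≤ Φ ξ := by nlinarith [hΦ.nonneg ξ]
  have hm_ge : ∀ s : ℝ, R ≤ s → s ≤ mAux Φ s := by
    intro s hs
    have hs0 : 0 < s := lt_of_lt_of_le (lt_of_lt_of_le one_pos hR1) hs
    refine le_csInf ((hsph_ne s hs0.le).image Φ) ?_
    rintro y ⟨ξ, hξ, rfl⟩
    rw [mem_sphere_zero_iff_norm] at hξ
    have h := hRsup ξ (by rw [hξ]; exact hs)
    rwa [hξ] at h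
  -- facts about gAux
  have hgbdd : ∀ r : ℝ, 0 < r → BddBelow ((fun s => mAux Φ s / s) '' Set.Ici r) := by
    intro r hr
    refine ⟨0, ?_⟩
    rintro y ⟨s, hs, rfl⟩
    exact div_nonneg (hm_nonneg s) (le_trans hr.le hs)
  have hg_le : ∀ r : ℝ, 0 < r → gAux Φ r ≤ mAux Φ r / r :=
    fun r hr => csInf_le (hgbdd r hr) ⟨r, Set.self_mem_Ici, rfl⟩
  have hg_pos : ∀ r : ℝ, 0 < r → 0 < gAux Φ r := by
    intro r hr
    have hb : 0 < min (mAux Φ r / max r R) 1 := by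
      apply lt_min _ one_pos
      exact div_pos (hm_pos r hr) (lt_of_lt_of_le hr (le_max_left _ _))
    refine lt_of_lt_of_le hb (le_csInf ⟨_, ⟨r, Set.self_mem_Ici, rfl⟩⟩ ?_)
    rintro y ⟨s, hs, rfl⟩
    rw [Set.mem_Ici] at hs
    have hs0 : 0 < s := lt_of_lt_of_le hr hs
    by_cases hsR : s ≤ max r R
    · exact le_trans (min_le_left _ _)
        (div_le_div₀ (hm_nonneg s) (hm_mono r s hr hs) hs0 hsR)
    · push_neg at hsR
      have hRs : R ≤ s := le_trans (le_max_right r R) hsR.le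
      refine le_trans (min_le_right _ _) ?_
      rw [le_div_iff₀ hs0, one_mul]
      exact hm_ge s hRs
  have hg_mono : ∀ r s : ℝ, 0 < r → r ≤ s → gAux Φ r ≤ gAux Φ s := by
    intro r s hr hrs
    exact csInf_le_csInf (hgbdd r hr) ⟨_, ⟨s, Set.self_mem_Ici, rfl⟩⟩
      (Set.image_mono (Set.Ici_subset_Ici.mpr hrs))
  -- facts about GAux
  have hfrac_mono : ∀ a b : ℝ, 0 ≤ a → a ≤ b → a / (1 + a) ≤ b / (1 + b) := by
    intro a b ha hab
    rw [div_le_div_iff₀ (by linarith) (by linarith)]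
    nlinarith
  have hfrac_strict : ∀ a b : ℝ, 0 ≤ a → a < b → a / (1 + a) < b / (1 + b) := by
    intro a b ha hab
    rw [div_lt_div_iff₀ (by linarith) (by linarith)]
    nlinarith
  have hG_eq : ∀ r : ℝ, 0 < r → GAux Φ r = gAux Φ r * (r / (1 + r)) := by
    intro r hr
    unfold GAux
    rw [if_neg (not_le.mpr hr)]
  have hG_zero : ∀ r : ℝ, r ≤ 0 → GAux Φ r = 0 := by
    intro r hr
    unfold GAux
    rw [if_pos hr]
  have hG_nonneg : ∀ r : ℝ, 0 ≤ GAux Φ r := by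
    intro r
    by_cases hr : r ≤ 0
    · rw [hG_zero r hr]
    · push_neg at hr
      rw [hG_eq r hr]
      exact mul_nonneg (hg_pos r hr).le (div_nonneg hr.le (by linarith))
  have hG_mono : Monotone (GAux Φ) := by
    intro a b hab
    by_cases hb : b ≤ 0
    · rw [hG_zero a (le_trans hab hb), hG_zero b hb]
    · push_neg at hb
      rw [hG_eq b hb]
      by_cases ha : a ≤ 0
      · rw [hG_zero a ha]
        exact mul_nonneg (hg_pos b hb).le (div_nonneg hb.le (by linarith))
      · push_neg at ha
        rw [hG_eq a ha]
        exact mul_le_mul (hg_mono a b ha hab) (hfrac_mono a b ha.le hab)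
          (div_nonneg ha.le (by linarith)) (hg_pos b hb).le
  have hG_strict : ∀ ⦃a b : ℝ⦄, 0 ≤ a → a < b → GAux Φ a < GAux Φ b := by
    intro a b ha hab
    have hb : 0 < b := lt_of_le_of_lt ha hab
    rw [hG_eq b hb]
    rcases eq_or_lt_of_le ha with h0 | h0
    · rw [hG_zero a h0.symm.le]
      exact mul_pos (hg_pos b hb) (div_pos hb (by linarith))
    · rw [hG_eq a h0]
      calc gAux Φ a * (a / (1 + a)) < gAux Φ a * (b / (1 + b)) :=
            mul_lt_mul_of_pos_left (hfrac_strict a b h0.le hab) (hg_pos a h0)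
        _ ≤ gAux Φ b * (b / (1 + b)) :=
            mul_le_mul_of_nonneg_right (hg_mono a b h0 hab.le)
              (div_nonneg hb.le (by linarith))
  have hG00 : GAux Φ 0 = 0 := hG_zero 0 le_rfl
  -- facts about hAux
  obtain ⟨hh_conv, hh_smono⟩ :
      StrictConvexOn ℝ (Set.Ici (0:ℝ)) (hAux Φ) ∧ StrictMonoOn (hAux Φ) (Set.Ici (0:ℝ)) :=
    strict_facts_of_G hG_mono hG00 hG_strict
  have hint : ∀ a b : ℝ, IntervalIntegrable (GAux Φ) MeasureTheory.volume a b :=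
    fun a b => hG_mono.intervalIntegrable
  have hh0 : hAux Φ 0 = 0 := intervalIntegral.integral_same
  have hh_nonneg : ∀ r : ℝ, 0 ≤ r → 0 ≤ hAux Φ r :=
    fun r hr => intervalIntegral.integral_nonneg hr (fun u _ => hG_nonneg u)
  have hh_le : ∀ r : ℝ, 0 < r → hAux Φ r ≤ mAux Φ r := by
    intro r hr
    have h1 : hAux Φ r ≤ r * GAux Φ r := by
      have h := intervalIntegral.integral_mono_on hr.le (hint 0 r) intervalIntegrable_const
        (fun t ht => hG_mono ht.2)
      simpa [hAux, intervalIntegral.integral_const, smul_eq_mul] using h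
    have h2 : GAux Φ r ≤ mAux Φ r / r := by
      rw [hG_eq r hr]
      have hq : r / (1 + r) ≤ 1 := by
        rw [div_le_one (by linarith)]
        linarith
      calc gAux Φ r * (r / (1 + r)) ≤ gAux Φ r * 1 :=
            mul_le_mul_of_nonneg_left hq (hg_pos r hr).le
        _ = gAux Φ r := mul_one _
        _ ≤ mAux Φ r / r := hg_le r hr
    calc hAux Φ r ≤ r * GAux Φ r := h1
      _ ≤ r * (mAux Φ r / r) := mul_le_mul_of_nonneg_left h2 hr.le
      _ = mAux Φ r := by field_simp
  have hs_le : ∀ ξ : EuclideanSpace ℝ (Fin n), hAux Φ ‖ξ‖ ≤ Φ ξ := by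
    intro ξ
    rcases eq_or_ne ξ 0 with rfl | hξ
    · rw [norm_zero, hh0, hΦ.map_zero]
    · have hξ0 : 0 < ‖ξ‖ := norm_pos_iff.mpr hξ
      exact le_trans (hh_le _ hξ0) (hm_le ξ)
  -- the strictly convex equivalent
  have hsc : StrictConvexOn ℝ Set.univ
      (fun ξ : EuclideanSpace ℝ (Fin n) => Φ ξ + hAux Φ ‖ξ‖) :=
    hΦ.convex.add_strictConvexOn (strictConvexOn_comp_norm hh_conv hh_smono)
  have hsand : ∀ ξ, Φ ξ ≤ Φ ξ + hAux Φ ‖ξ‖ ∧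
      Φ ξ + hAux Φ ‖ξ‖ ≤ Φ ((1 + 1 : ℝ) • ξ) := by
    intro ξ
    constructor
    · linarith [hh_nonneg ‖ξ‖ (norm_nonneg ξ)]
    · calc Φ ξ + hAux Φ ‖ξ‖ ≤ Φ ξ + Φ ξ := by linarith [hs_le ξ]
        _ = 2 * Φ ξ := (two_mul _).symm
        _ ≤ Φ ((1 + 1 : ℝ) • ξ) := hdouble ξ
  refine ⟨fun ξ => Φ ξ + hAux Φ ‖ξ‖, 1, ⟨⟨?_, ?_, hsc.convexOn, ?_, ?_, ?_⟩, ?_, ?_, ?_⟩,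
    hsc, one_pos, hsand⟩
  · exact fun ξ => add_nonneg (hΦ.nonneg ξ) (hh_nonneg _ (norm_nonneg ξ))
  · intro ξ
    rw [hΦ.even, norm_neg]
  · rw [hΦ.map_zero, norm_zero, hh0, add_zero]
  · intro t ht
    refine (hΦ.sublevel_bounded t ht).subset ?_
    intro ξ hξ
    have h1 : 0 ≤ hAux Φ ‖ξ‖ := hh_nonneg _ (norm_nonneg ξ)
    simp only [Set.mem_setOf_eq] at hξ ⊢
    linarith
  · intro t ht
    refine Filter.mem_of_superset (hΦ.sublevel_mem_nhds (t/2) (by linarith)) ?_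
    intro ξ hξ
    simp only [Set.mem_setOf_eq] at hξ ⊢
    have h1 := hs_le ξ
    linarith
  · intro ξ hξ
    have h1 : 0 ≤ hAux Φ ‖ξ‖ := hh_nonneg _ (norm_nonneg ξ)
    have h2 := hΦ.nonneg ξ
    exact hΦ.eq_zero ξ (by linarith)
  · apply tendsto_atTop_mono _ hΦ.tendsto_atTop
    intro ξ
    rcases eq_or_ne ξ 0 with rfl | hξ
    · simp
    · have h0 : (0:ℝ) < ‖ξ‖ := norm_pos_iff.mpr hξ
      apply (div_le_div_iff_of_pos_right h0).mpr
      linarith [hh_nonneg ‖ξ‖ (norm_nonneg ξ)]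
  · have hev1 : ∀ᶠ ξ in 𝓝[≠] (0 : EuclideanSpace ℝ (Fin n)),
        0 ≤ (Φ ξ + hAux Φ ‖ξ‖) / ‖ξ‖ :=
      Filter.Eventually.of_forall fun ξ =>
        div_nonneg (add_nonneg (hΦ.nonneg ξ) (hh_nonneg _ (norm_nonneg ξ))) (norm_nonneg ξ)
    have hev2 : ∀ᶠ ξ in 𝓝[≠] (0 : EuclideanSpace ℝ (Fin n)),
        (Φ ξ + hAux Φ ‖ξ‖) / ‖ξ‖ ≤ 2 * (Φ ξ / ‖ξ‖) := by
      refine eventually_mem_nhdsWithin.mono ?_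
      intro ξ hξ
      have hξ' : ξ ≠ 0 := hξ
      have h0 : (0:ℝ) < ‖ξ‖ := norm_pos_iff.mpr hξ'
      have h1 : Φ ξ + hAux Φ ‖ξ‖ ≤ 2 * Φ ξ := by linarith [hs_le ξ]
      calc (Φ ξ + hAux Φ ‖ξ‖) / ‖ξ‖ ≤ (2 * Φ ξ) / ‖ξ‖ := (div_le_div_iff_of_pos_right h0).mpr h1
        _ = 2 * (Φ ξ / ‖ξ‖) := mul_div_assoc _ _ _
    have h2 : Tendsto (fun ξ : EuclideanSpace ℝ (Fin n) => 2 * (Φ ξ / ‖ξ‖))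
        (𝓝[≠] (0 : EuclideanSpace ℝ (Fin n))) (𝓝 0) := by
      have := hΦ.tendsto_zero.const_mul (2:ℝ)
      simpa using this
    exact squeeze_zero' hev1 hev2 h2

/-- Every `n`-dimensional `N`-function admits an equivalent strictly convex
`n`-dimensional `N`-function: there are `Ψ` strictly convex and `c > 0` with
`Φ(ξ) ≤ Ψ(ξ) ≤ Φ((1+c)ξ)` for all `ξ`. -/
theorem exists_strictConvex_equivalent_NFunction {n : ℕ}
    (Φ : EuclideanSpace ℝ (Fin n) → ℝ) (hΦ : IsNFunction Φ) :
    ∃ (Ψ : EuclideanSpace ℝ (Fin n) → ℝ) (c : ℝ), IsNFunction Ψ ∧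
      StrictConvexOn ℝ Set.univ Ψ ∧ 0 < c ∧
      ∀ ξ, Φ ξ ≤ Ψ ξ ∧ Ψ ξ ≤ Φ ((1 + c) • ξ) := by
  rcases Nat.eq_zero_or_pos n with hn | hn
  · subst hn
    haveI : Subsingleton (EuclideanSpace ℝ (Fin 0)) :=
      ⟨fun a b => by ext i; exact Fin.elim0 i⟩
    refine ⟨Φ, 1, hΦ, ⟨convex_univ, ?_⟩, one_pos,
      fun ξ => ⟨le_rfl, le_of_eq (congrArg Φ (Subsingleton.elim _ _))⟩⟩
    intro x _ y _ hxy
    exact absurd (Subsingleton.elim x y) hxy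
  · exact aux_main hn Φ hΦ
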